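/- In the automaton A constructed from the graph G as above (states s_1,…,s_p, t_1,…,t_p, f; letter ṽ_i sends s_i to f, sends s_j to t_j whenever v_i v_j ∈ E, and all other transitions are self-loops), every synchronizing set of states whose states are all mapped to f by some word yields an independent set: if a word w maps each state of S' to f, then I' = { v_i : s_i ∈ S' } is an independent set in G. -/

import Mathlib

def deltaStar {Q A : Type*} (δ : Q → A → Q) (q : Q) (w : List A) : Q :=
  w.foldl δ q

def IsSyncSet {Q A : Type*} (δ : Q → A → Q) (S : Set Q) : Prop :=
  ∃ (w : List A) (q : Q), ∀ s ∈ S, deltaStar δ s w = q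

/-- States of the automaton built from a graph on p vertices:
states s_i, t_i (i < p) and a sink-target state f. -/
inductive St (p : ℕ) : Type where
  | s : Fin p → St p
  | t : Fin p → St p
  | f : St p
deriving DecidableEq

/-- Transitions: letter j sends s_j to f, sends s_i to t_i when v_i v_j ∈ E,
and all other transitions are self-loops. -/
def gDelta {p : ℕ} (G : SimpleGraph (Fin p)) [DecidableRel G.Adj] :
    St p → Fin p → St p
  | St.s i, j => if i = j then St.f else if G.Adj i j then St.t i else St.s i
  | St.t i, _ => St.t i
  | St.f, _ => St.f

lemma t_stuck {p : ℕ} (G : SimpleGraph (Fin p)) [DecidableRel G.Adj]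
    (i : Fin p) (w : List (Fin p)) : deltaStar (gDelta G) (St.t i) w = St.t i := by
  induction w with
  | nil => rfl
  | cons a w ih => simpa [deltaStar, gDelta] using ih

lemma reach_decomp {p : ℕ} (G : SimpleGraph (Fin p)) [DecidableRel G.Adj]
    (i : Fin p) (w : List (Fin p)) (h : deltaStar (gDelta G) (St.s i) w = St.f) :
    ∃ w1 w2, w = w1 ++ i :: w2 ∧ ∀ x ∈ w1, ¬ G.Adj i x := by
  induction w with
  | nil => simp [deltaStar] at h
  | cons a w ih =>
    by_cases hia : i = a
    · exact ⟨[], w, by simp [hia], by simp⟩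
    · by_cases hadj : G.Adj i a
      · exfalso
        have : deltaStar (gDelta G) (St.s i) (a :: w) = St.t i := by
          simp [deltaStar, gDelta, hia, hadj]
          exact t_stuck G i w
        rw [h] at this; exact absurd this (by simp)
      · have h' : deltaStar (gDelta G) (St.s i) w = St.f := by
          simpa [deltaStar, gDelta, hia, hadj] using h
        obtain ⟨w1, w2, hw, hall⟩ := ih h'
        refine ⟨a :: w1, w2, by simp [hw], ?_⟩
        intro x hx
        rcases List.mem_cons.mp hx with rfl | hx
        · exact hadj
        · exact hall x hx

/-- If a word maps every state of S' to f, then the corresponding vertex set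
is independent in G. -/
theorem stmt_8 {p : ℕ} (G : SimpleGraph (Fin p)) [DecidableRel G.Adj]
    (S' : Set (St p)) (w : List (Fin p))
    (hw : ∀ q ∈ S', deltaStar (gDelta G) q w = St.f) :
    ({i : Fin p | St.s i ∈ S'}).Pairwise (fun a b => ¬ G.Adj a b) := by
  intro i hi j hj hij hadj
  obtain ⟨w1, w2, e1, h1⟩ := reach_decomp G i w (hw _ hi)
  obtain ⟨u1, u2, e2, h2⟩ := reach_decomp G j w (hw _ hj)
  have hi_get : w[w1.length]? = some i := by
    rw [e1, List.getElem?_append_right le_rfl]; simp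
  have hj_get : w[u1.length]? = some j := by
    rw [e2, List.getElem?_append_right le_rfl]; simp
  rcases lt_trichotomy w1.length u1.length with hlt | heq | hgt
  · have : u1[w1.length]? = some i := by
      rw [e2] at hi_get
      rwa [List.getElem?_append_left hlt] at hi_get
    exact h2 i (List.mem_of_getElem? this) (G.adj_symm hadj)
  · rw [heq, hj_get] at hi_get
    exact hij (Option.some.inj hi_get).symm
  · have : w1[u1.length]? = some j := by
      rw [e1] at hj_get
      rwa [List.getElem?_append_left hgt] at hj_get
    exact h1 j (List.mem_of_getElem? this) hadj
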